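/- The polynomial q1(x) = 2x^6 - 153x^5 + 894x^4 - 1625x^3 + 1234x^2 - 444x + 48 has exactly one root in the open interval (0, 1/5). -/

import Mathlib

noncomputable def f6 : ℝ → ℝ := fun x =>
  2 * x ^ 6 - 153 * x ^ 5 + 894 * x ^ 4 - 1625 * x ^ 3 + 1234 * x ^ 2 - 444 * x + 48

lemma f6_hasDeriv (x : ℝ) : HasDerivAt f6
    (12 * x ^ 5 - 765 * x ^ 4 + 3576 * x ^ 3 - 4875 * x ^ 2 + 2468 * x - 444) x := by
  have h := ((((((hasDerivAt_pow 6 x).const_mul (2:ℝ)).sub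
      ((hasDerivAt_pow 5 x).const_mul 153)).add
      ((hasDerivAt_pow 4 x).const_mul 894)).sub
      ((hasDerivAt_pow 3 x).const_mul 1625)).add
      ((hasDerivAt_pow 2 x).const_mul 1234)).sub ((hasDerivAt_id x).const_mul 444)
  have h2 := h.add_const (48:ℝ)
  refine h2.congr_deriv ?_
  push_cast
  ring

lemma f6_deriv_neg {x : ℝ} (h0 : 0 < x) (h1 : x < 1/5) :
    12 * x ^ 5 - 765 * x ^ 4 + 3576 * x ^ 3 - 4875 * x ^ 2 + 2468 * x - 444 < 0 := by
  nlinarith [mul_pos h0 h0, sq_nonneg x, pow_pos h0 3, pow_pos h0 4, pow_pos h0 5,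
    mul_nonneg (pow_pos h0 3).le (sub_pos.mpr h1).le,
    mul_nonneg (pow_pos h0 4).le (sub_pos.mpr h1).le,
    mul_nonneg (mul_nonneg (pow_pos h0 2).le (sub_pos.mpr h1).le) (sub_pos.mpr h1).le,
    mul_nonneg h0.le (sub_pos.mpr h1).le]

lemma f6_anti : StrictAntiOn f6 (Set.Icc 0 (1/5 : ℝ)) := by
  apply strictAntiOn_of_deriv_neg (convex_Icc _ _)
  · exact fun x _ => (f6_hasDeriv x).differentiableAt.continuousAt.continuousWithinAt
  · intro x hx
    rw [interior_Icc] at hx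
    rw [(f6_hasDeriv x).deriv]
    exact f6_deriv_neg hx.1 hx.2

theorem stmt_6 :
    ∃! x : ℝ, x ∈ Set.Ioo (0 : ℝ) (1/5) ∧
      2 * x ^ 6 - 153 * x ^ 5 + 894 * x ^ 4 - 1625 * x ^ 3 + 1234 * x ^ 2 - 444 * x + 48 = 0 := by
  have hcont : ContinuousOn f6 (Set.Icc (0:ℝ) (1/5)) :=
    fun x _ => (f6_hasDeriv x).differentiableAt.continuousAt.continuousWithinAt
  have hle : (0:ℝ) ≤ 1/5 := by norm_num
  have hmem : (0:ℝ) ∈ Set.Ioo (f6 (1/5)) (f6 0) := by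
    constructor <;> norm_num [f6]
  obtain ⟨x, hx, hfx⟩ := intermediate_value_Ioo' hle hcont hmem
  refine ⟨x, ⟨hx, by simpa [f6] using hfx⟩, ?_⟩
  rintro y ⟨hy, hfy⟩
  have hfy' : f6 y = 0 := by simpa [f6] using hfy
  exact f6_anti.injOn (Set.mem_Icc_of_Ioo hy) (Set.mem_Icc_of_Ioo hx) (by rw [hfy', hfx])
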